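/- Let T > 0, M ≥ 0, and let u : ℝ × [0,T) → ℝ be a classical periodic solution of the Fornberg–Whitham equation such that, in addition, ∂_x² u, ∂_x³ u and ∂_t ∂_x² u exist and are continuous on ℝ × [0,T). Let u₀(x) = u(x,0). If ∂_x u(x,t) ≥ -M for all x ∈ ℝ and t ∈ [0,T), then for every t ∈ [0,T), ∫_0^1 (∂_x² u(x,t))² dx ≤ e^{(2 + 15M/2) t} ∫_0^1 u₀''(x)² dx. -/

import Mathlib

open MeasureTheory

/-- The 1-periodic convolution kernel of `(id - ∂ₓ²)⁻¹` on the circle, on `[0,1)`. -/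
noncomputable def FWKernel (y : ℝ) : ℝ :=
  (Real.exp y + Real.exp (1 - y)) / (2 * (Real.exp 1 - 1))


open Set intervalIntegral

noncomputable def FWKernel' (y : ℝ) : ℝ :=
  (Real.exp y - Real.exp (1 - y)) / (2 * (Real.exp 1 - 1))

@[fun_prop] lemma FWKernel_cont : Continuous FWKernel := by unfold FWKernel; fun_prop
lemma FWKernel'_cont : Continuous FWKernel' := by unfold FWKernel'; fun_prop

/-- Differentiation under the integral sign for the kernel convolution. -/
lemma conv_hasDerivAt {f g : ℝ → ℝ} (hf : ∀ x, HasDerivAt f (g x) x)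
    (hgc : Continuous g) (x₀ : ℝ) :
    HasDerivAt (fun x => ∫ y in (0:ℝ)..1, FWKernel y * f (x - y))
      (∫ y in (0:ℝ)..1, FWKernel y * g (x₀ - y)) x₀ := by
  have hfc : Continuous f := by
    have : Differentiable ℝ f := fun x => (hf x).differentiableAt
    exact this.continuous
  obtain ⟨CK, hCK⟩ := isCompact_Icc.exists_bound_of_continuousOn
    (FWKernel_cont.continuousOn (s := Icc (0:ℝ) 1))
  obtain ⟨C, hC⟩ := isCompact_Icc.exists_bound_of_continuousOn
    (hgc.continuousOn (s := Icc (x₀ - 2) (x₀ + 1)))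
  have hCK0 : 0 ≤ CK := le_trans (norm_nonneg _) (hCK 0 ⟨le_refl _, zero_le_one⟩)
  have hC0 : 0 ≤ C := le_trans (norm_nonneg _) (hC (x₀ - 2) ⟨le_refl _, by linarith⟩)
  refine (intervalIntegral.hasDerivAt_integral_of_dominated_loc_of_deriv_le
    (F := fun x y => FWKernel y * f (x - y)) (F' := fun x y => FWKernel y * g (x - y))
    (bound := fun _ => CK * C) (Metric.ball_mem_nhds x₀ one_pos) ?_ ?_ ?_ ?_ ?_ ?_).2
  · filter_upwards with x
    exact (Continuous.aestronglyMeasurable (by fun_prop)).restrict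
  · exact Continuous.intervalIntegrable (by fun_prop) 0 1
  · exact (Continuous.aestronglyMeasurable (by fun_prop)).restrict
  · filter_upwards with y hy x hx
    rw [Set.uIoc_of_le (by norm_num : (0:ℝ) ≤ 1)] at hy
    rw [Metric.mem_ball, Real.dist_eq] at hx
    have h1 : |FWKernel y| ≤ CK := by
      have := hCK y ⟨le_of_lt hy.1, hy.2⟩; simpa [Real.norm_eq_abs] using this
    have h2 : |g (x - y)| ≤ C := by
      have hxy : x - y ∈ Icc (x₀ - 2) (x₀ + 1) := by
        constructor <;> [skip; skip] <;> cases' abs_lt.mp hx with l r <;>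
          [linarith [hy.2, hy.1]; linarith [hy.2, hy.1]]
      have := hC (x - y) hxy; simpa [Real.norm_eq_abs] using this
    calc ‖FWKernel y * g (x - y)‖ = |FWKernel y| * |g (x - y)| := by
          simp [Real.norm_eq_abs, abs_mul]
      _ ≤ CK * C := mul_le_mul h1 h2 (abs_nonneg _) hCK0
  · exact intervalIntegrable_const
  · filter_upwards with y hy x hx
    have h1 : HasDerivAt (fun x => f (x - y)) (g (x - y) * 1) x :=
      (hf (x - y)).comp x ((hasDerivAt_id x).sub_const y)
    simpa using h1.const_mul (FWKernel y)

lemma FWKernel'_deriv (y : ℝ) : HasDerivAt FWKernel' (FWKernel y) y := by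
  have h1 : HasDerivAt (fun z : ℝ => 1 - z) (-1) y := (hasDerivAt_id y).const_sub 1
  have h2 : HasDerivAt (fun z : ℝ => Real.exp (1 - z)) (Real.exp (1 - y) * (-1)) y :=
    (Real.hasDerivAt_exp (1 - y)).comp y h1
  have h3 : HasDerivAt (fun z : ℝ => Real.exp z - Real.exp (1 - z))
      (Real.exp y - Real.exp (1 - y) * (-1)) y := (Real.hasDerivAt_exp y).sub h2
  have := h3.div_const (2 * (Real.exp 1 - 1))
  unfold FWKernel FWKernel'
  exact this.congr_deriv (by ring)

lemma FWKernel_deriv (y : ℝ) : HasDerivAt FWKernel (FWKernel' y) y := by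
  have h1 : HasDerivAt (fun z : ℝ => 1 - z) (-1) y := (hasDerivAt_id y).const_sub 1
  have h2 : HasDerivAt (fun z : ℝ => Real.exp (1 - z)) (Real.exp (1 - y) * (-1)) y :=
    (Real.hasDerivAt_exp (1 - y)).comp y h1
  have h3 : HasDerivAt (fun z : ℝ => Real.exp z + Real.exp (1 - z))
      (Real.exp y + Real.exp (1 - y) * (-1)) y := (Real.hasDerivAt_exp y).add h2
  have := h3.div_const (2 * (Real.exp 1 - 1))
  unfold FWKernel FWKernel'
  exact this.congr_deriv (by ring)

lemma one_lt_exp_one : (1:ℝ) < Real.exp 1 := by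
  have := Real.exp_one_gt_d9; linarith

lemma FWKernel_one : FWKernel 1 = FWKernel 0 := by
  unfold FWKernel
  norm_num
  ring

lemma FWKernel'_one : FWKernel' 1 = 1/2 := by
  unfold FWKernel'
  have h := one_lt_exp_one
  rw [sub_self, Real.exp_zero]
  rw [div_eq_iff (ne_of_gt (by nlinarith : (0:ℝ) < 2 * (Real.exp 1 - 1)))]
  ring

lemma FWKernel'_zero : FWKernel' 0 = -(1/2) := by
  unfold FWKernel'
  have h := one_lt_exp_one
  rw [Real.exp_zero, sub_zero]
  rw [div_eq_iff (ne_of_gt (by nlinarith : (0:ℝ) < 2 * (Real.exp 1 - 1)))]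
  ring

lemma deriv_periodic {f g : ℝ → ℝ} (hf : ∀ x, HasDerivAt f (g x) x)
    (hper : ∀ x, f (x + 1) = f x) (x : ℝ) : g (x + 1) = g x := by
  have h1 : HasDerivAt (fun x' => f (x' + 1)) (g (x + 1) * 1) x :=
    (hf (x + 1)).comp x ((hasDerivAt_id x).add_const 1)
  have h2 : (fun x' => f (x' + 1)) = f := funext hper
  rw [h2, mul_one] at h1
  exact h1.unique (hf x)

/-- Integration by parts twice: the convolution with the kernel inverts `1 - ∂ₓ²`. -/
lemma conv_parts {f1 f2 f3 : ℝ → ℝ}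
    (h12 : ∀ x, HasDerivAt f1 (f2 x) x) (h23 : ∀ x, HasDerivAt f2 (f3 x) x)
    (hf3c : Continuous f3)
    (hper1 : ∀ x, f1 (x + 1) = f1 x) (hper2 : ∀ x, f2 (x + 1) = f2 x) (x : ℝ) :
    (∫ y in (0:ℝ)..1, FWKernel y * f3 (x - y))
      = (∫ y in (0:ℝ)..1, FWKernel y * f1 (x - y)) - f1 x := by
  have hf1c : Continuous f1 := by
    have : Differentiable ℝ f1 := fun z => (h12 z).differentiableAt
    exact this.continuous
  have hf2c : Continuous f2 := by
    have : Differentiable ℝ f2 := fun z => (h23 z).differentiableAt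
    exact this.continuous
  have step1 : (∫ y in (0:ℝ)..1, FWKernel y * f3 (x - y))
      = ∫ y in (0:ℝ)..1, FWKernel' y * f2 (x - y) := by
    have hv : ∀ y ∈ uIcc (0:ℝ) 1, HasDerivAt (fun y => -f2 (x - y)) (f3 (x - y)) y := by
      intro y _
      have h1 : HasDerivAt (fun y : ℝ => x - y) (-1) y := (hasDerivAt_id y).const_sub x
      have h2 : HasDerivAt (fun y => f2 (x - y)) (f3 (x - y) * (-1)) y :=
        (h23 (x - y)).comp y h1
      have := h2.neg
      exact this.congr_deriv (by ring)
    have hK : ∀ y ∈ uIcc (0:ℝ) 1, HasDerivAt FWKernel (FWKernel' y) y :=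
      fun y _ => FWKernel_deriv y
    have hibp := intervalIntegral.integral_mul_deriv_eq_deriv_mul hK hv
      (FWKernel'_cont.intervalIntegrable 0 1)
      (Continuous.intervalIntegrable (by fun_prop) 0 1)
    simp only [sub_zero] at hibp
    have hb : f2 (x - 1) = f2 x := by
      have := (hper2 (x - 1)).symm; simpa using this
    rw [hibp, FWKernel_one, hb]
    have : ∫ y in (0:ℝ)..1, FWKernel' y * -f2 (x - y)
        = -∫ y in (0:ℝ)..1, FWKernel' y * f2 (x - y) := by
      rw [← intervalIntegral.integral_neg]; congr 1; funext y; ring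
    rw [this]
    ring
  have step2 : (∫ y in (0:ℝ)..1, FWKernel' y * f2 (x - y))
      = (∫ y in (0:ℝ)..1, FWKernel y * f1 (x - y)) - f1 x := by
    have hv : ∀ y ∈ uIcc (0:ℝ) 1, HasDerivAt (fun y => -f1 (x - y)) (f2 (x - y)) y := by
      intro y _
      have h1 : HasDerivAt (fun y : ℝ => x - y) (-1) y := (hasDerivAt_id y).const_sub x
      have h2 : HasDerivAt (fun y => f1 (x - y)) (f2 (x - y) * (-1)) y :=
        (h12 (x - y)).comp y h1
      have := h2.neg
      exact this.congr_deriv (by ring)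
    have hK : ∀ y ∈ uIcc (0:ℝ) 1, HasDerivAt FWKernel' (FWKernel y) y :=
      fun y _ => FWKernel'_deriv y
    have hibp := intervalIntegral.integral_mul_deriv_eq_deriv_mul hK hv
      (FWKernel_cont.intervalIntegrable 0 1)
      (Continuous.intervalIntegrable (by fun_prop) 0 1)
    simp only [sub_zero] at hibp
    have hb : f1 (x - 1) = f1 x := by
      have := (hper1 (x - 1)).symm; simpa using this
    rw [hibp, FWKernel'_one, FWKernel'_zero, hb]
    have : ∫ y in (0:ℝ)..1, FWKernel y * -f1 (x - y)
        = -∫ y in (0:ℝ)..1, FWKernel y * f1 (x - y) := by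
      rw [← intervalIntegral.integral_neg]; congr 1; funext y; ring
    rw [this]
    ring
  rw [step1, step2]

/-- Continuity of a parametric interval integral over `[0,1]`. -/
lemma cont_param {F : ℝ → ℝ → ℝ} {b : ℝ}
    (hF : ContinuousOn (fun p : ℝ × ℝ => F p.1 p.2) (Icc (0:ℝ) 1 ×ˢ Icc (0:ℝ) b)) :
    ContinuousOn (fun τ => ∫ x in (0:ℝ)..1, F x τ) (Icc (0:ℝ) b) := by
  obtain ⟨C, hC⟩ := (isCompact_Icc.prod isCompact_Icc).exists_bound_of_continuousOn hF
  have hrw : (fun τ => ∫ x in (0:ℝ)..1, F x τ)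
      = fun τ => ∫ x in Ioc (0:ℝ) 1, F x τ ∂volume :=
    funext fun τ => intervalIntegral.integral_of_le zero_le_one
  rw [hrw]
  apply MeasureTheory.continuousOn_of_dominated (bound := fun _ => C)
  · intro τ hτ
    apply ContinuousOn.aestronglyMeasurable _ measurableSet_Ioc
    have : ContinuousOn (fun x => F x τ) (Icc (0:ℝ) 1) :=
      hF.comp (by fun_prop : Continuous fun x : ℝ => (x, τ)).continuousOn
        (fun x hx => ⟨hx, hτ⟩)
    exact this.mono Ioc_subset_Icc_self
  · intro τ hτ
    rw [ae_restrict_iff' measurableSet_Ioc]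
    filter_upwards with x hx
    exact hC (x, τ) ⟨Ioc_subset_Icc_self hx, hτ⟩
  · exact integrableOn_const (by simp [Real.volume_Ioc])
  · rw [ae_restrict_iff' measurableSet_Ioc]
    filter_upwards with x hx
    exact hF.comp (by fun_prop : Continuous fun τ : ℝ => (x, τ)).continuousOn
      (fun τ hτ => ⟨Ioc_subset_Icc_self hx, hτ⟩)

/-- A classical periodic solution of the Fornberg–Whitham equation on `ℝ × [0,T)`:
`u` is 1-periodic in `x`, has continuous partial derivatives `ux = ∂ₓ u` and
`ut = ∂ₜ u` on `ℝ × [0,T)`, and satisfies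
`∂ₜ u + (3/2) u ∂ₓ u = ∫_0^1 K(y) ∂ₓ u(x - y, t) dy`. -/
def IsClassicalFWSolution (T : ℝ) (u ux ut : ℝ → ℝ → ℝ) : Prop :=
  ContinuousOn (fun p : ℝ × ℝ => u p.1 p.2) (Set.univ ×ˢ Set.Ico 0 T) ∧
  (∀ x : ℝ, ∀ t ∈ Set.Ico (0 : ℝ) T, u (x + 1) t = u x t) ∧
  (∀ x : ℝ, ∀ t ∈ Set.Ico (0 : ℝ) T, HasDerivAt (fun x' => u x' t) (ux x t) x) ∧
  (∀ x : ℝ, ∀ t ∈ Set.Ico (0 : ℝ) T,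
    HasDerivWithinAt (fun t' => u x t') (ut x t) (Set.Ico 0 T) t) ∧
  ContinuousOn (fun p : ℝ × ℝ => ux p.1 p.2) (Set.univ ×ˢ Set.Ico 0 T) ∧
  ContinuousOn (fun p : ℝ × ℝ => ut p.1 p.2) (Set.univ ×ˢ Set.Ico 0 T) ∧
  (∀ x : ℝ, ∀ t ∈ Set.Ico (0 : ℝ) T,
    ut x t + (3 / 2) * u x t * ux x t = ∫ y in (0:ℝ)..1, FWKernel y * ux (x - y) t)

set_option maxHeartbeats 1000000 in
/-- H² energy estimate: if a classical periodic Fornberg–Whitham solution has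
`∂ₓu ≥ -M` on `ℝ × [0,T)` and enough regularity, then
`∫_0^1 (∂ₓ²u(x,t))² dx ≤ e^{(2 + 15M/2)t} ∫_0^1 u₀''(x)² dx`. -/
theorem fw_H2_bound (T : ℝ) (hT : 0 < T) (M : ℝ) (hM : 0 ≤ M)
    (u ux ut uxx uxxx utxx : ℝ → ℝ → ℝ)
    (hu : IsClassicalFWSolution T u ux ut)
    (huxx : ∀ x : ℝ, ∀ t ∈ Set.Ico (0 : ℝ) T,
      HasDerivAt (fun x' => ux x' t) (uxx x t) x)
    (huxxx : ∀ x : ℝ, ∀ t ∈ Set.Ico (0 : ℝ) T,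
      HasDerivAt (fun x' => uxx x' t) (uxxx x t) x)
    (hutxx : ∀ x : ℝ, ∀ t ∈ Set.Ico (0 : ℝ) T,
      HasDerivWithinAt (fun t' => uxx x t') (utxx x t) (Set.Ico 0 T) t)
    (huxxc : ContinuousOn (fun p : ℝ × ℝ => uxx p.1 p.2) (Set.univ ×ˢ Set.Ico 0 T))
    (huxxxc : ContinuousOn (fun p : ℝ × ℝ => uxxx p.1 p.2) (Set.univ ×ˢ Set.Ico 0 T))
    (hutxxc : ContinuousOn (fun p : ℝ × ℝ => utxx p.1 p.2) (Set.univ ×ˢ Set.Ico 0 T))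
    (hlower : ∀ x : ℝ, ∀ t ∈ Set.Ico (0 : ℝ) T, ux x t ≥ -M) :
    ∀ t ∈ Set.Ico (0 : ℝ) T,
      (∫ x in (0:ℝ)..1, (uxx x t) ^ 2)
        ≤ Real.exp ((2 + 15 * M / 2) * t) * ∫ x in (0:ℝ)..1, (uxx x 0) ^ 2 := by
  obtain ⟨huc, huper, hux, hut, huxc, hutc, hpde⟩ := hu
  -- restriction helpers
  have hsub : ∀ b : ℝ, b < T → ∀ τ ∈ Icc (0:ℝ) b, τ ∈ Ico (0:ℝ) T :=
    fun b hb τ hτ => ⟨hτ.1, lt_of_le_of_lt hτ.2 hb⟩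
  have hcx : ∀ (f : ℝ → ℝ → ℝ),
      ContinuousOn (fun p : ℝ × ℝ => f p.1 p.2) (Set.univ ×ˢ Set.Ico 0 T) →
      ∀ s ∈ Set.Ico (0:ℝ) T, Continuous (fun x => f x s) := by
    intro f hf s hs
    have hm : Continuous fun x : ℝ => ((x, s) : ℝ × ℝ) := by fun_prop
    rw [← continuousOn_univ]
    exact hf.comp hm.continuousOn (fun x _ => ⟨trivial, hs⟩)
  have hct : ∀ (f : ℝ → ℝ → ℝ),
      ContinuousOn (fun p : ℝ × ℝ => f p.1 p.2) (Set.univ ×ˢ Set.Ico 0 T) →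
      ∀ (x b : ℝ), b < T → ContinuousOn (fun τ => f x τ) (Icc 0 b) := by
    intro f hf x b hb
    have hm : Continuous fun τ : ℝ => ((x, τ) : ℝ × ℝ) := by fun_prop
    exact hf.comp hm.continuousOn (fun τ hτ => ⟨trivial, hsub b hb τ hτ⟩)
  have hcIco : ∀ (f : ℝ → ℝ → ℝ),
      ContinuousOn (fun p : ℝ × ℝ => f p.1 p.2) (Set.univ ×ˢ Set.Ico 0 T) →
      ∀ (x : ℝ), ContinuousOn (fun τ => f x τ) (Set.Ico 0 T) := by
    intro f hf x
    have hm : Continuous fun τ : ℝ => ((x, τ) : ℝ × ℝ) := by fun_prop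
    exact hf.comp hm.continuousOn (fun τ hτ => ⟨trivial, hτ⟩)
  have hbound : ∀ (f : ℝ → ℝ → ℝ),
      ContinuousOn (fun p : ℝ × ℝ => f p.1 p.2) (Set.univ ×ˢ Set.Ico 0 T) →
      ∀ (a b c : ℝ), c < T →
        ∃ C, 0 ≤ C ∧ ∀ x ∈ Icc a b, ∀ τ ∈ Icc (0:ℝ) c, |f x τ| ≤ C := by
    intro f hf a b c hc
    obtain ⟨C, hC⟩ := (isCompact_Icc.prod isCompact_Icc).exists_bound_of_continuousOn
      (hf.mono (fun p hp => ⟨trivial, hsub c hc p.2 hp.2⟩)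
        : ContinuousOn (fun p : ℝ × ℝ => f p.1 p.2) (Icc a b ×ˢ Icc (0:ℝ) c))
    refine ⟨max C 0, le_max_right _ _, fun x hx τ hτ => ?_⟩
    calc |f x τ| ≤ C := by simpa [Real.norm_eq_abs] using hC (x, τ) ⟨hx, hτ⟩
      _ ≤ max C 0 := le_max_left _ _
  -- periodicity
  have per_ux : ∀ s ∈ Set.Ico (0:ℝ) T, ∀ x, ux (x + 1) s = ux x s :=
    fun s hs => deriv_periodic (fun x => hux x s hs) (fun x => huper x s hs)
  have per_uxx : ∀ s ∈ Set.Ico (0:ℝ) T, ∀ x, uxx (x + 1) s = uxx x s :=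
    fun s hs => deriv_periodic (fun x => huxx x s hs) (per_ux s hs)
  -- the convolution terms
  set w : ℝ → ℝ → ℝ := fun x s => ∫ y in (0:ℝ)..1, FWKernel y * ux (x - y) s with hw_def
  set w1 : ℝ → ℝ → ℝ := fun x s => ∫ y in (0:ℝ)..1, FWKernel y * uxx (x - y) s with hw1_def
  have hw_pde : ∀ s ∈ Set.Ico (0:ℝ) T, ∀ x,
      w x s = ut x s + 3/2 * (u x s * ux x s) := by
    intro s hs x
    have := hpde x s hs
    simp only [hw_def]
    linarith
  have hwd : ∀ s ∈ Set.Ico (0:ℝ) T, ∀ x, HasDerivAt (fun x' => w x' s) (w1 x s) x := by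
    intro s hs x
    simp only [hw_def, hw1_def]
    exact conv_hasDerivAt (fun z => huxx z s hs) (hcx uxx huxxc s hs) x
  have hw1d : ∀ s ∈ Set.Ico (0:ℝ) T, ∀ x,
      HasDerivAt (fun x' => w1 x' s) (w x s - ux x s) x := by
    intro s hs x
    have h := conv_hasDerivAt (f := fun z => uxx z s) (g := fun z => uxxx z s)
      (fun z => huxxx z s hs) (hcx uxxx huxxxc s hs) x
    have heq := conv_parts (f1 := fun z => ux z s) (f2 := fun z => uxx z s)
      (f3 := fun z => uxxx z s) (fun z => huxx z s hs) (fun z => huxxx z s hs)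
      (hcx uxxx huxxxc s hs) (per_ux s hs) (per_uxx s hs) x
    simp only [hw1_def, hw_def]
    rw [show (∫ y in (0:ℝ)..1, FWKernel y * ux (x - y) s) - ux x s
        = ∫ y in (0:ℝ)..1, FWKernel y * uxxx (x - y) s from heq.symm]
    exact h
  -- the first and second x-derivatives of ut
  set gg : ℝ → ℝ → ℝ :=
    fun x s => w1 x s - 3/2 * (ux x s * ux x s + u x s * uxx x s) with hg_def
  set hh : ℝ → ℝ → ℝ :=
    fun x s => w x s - ux x s
      - 3/2 * ((uxx x s * ux x s + ux x s * uxx x s)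
        + (ux x s * uxx x s + u x s * uxxx x s)) with hh_def
  have hut_x : ∀ s ∈ Set.Ico (0:ℝ) T, ∀ x,
      HasDerivAt (fun x' => ut x' s) (gg x s) x := by
    intro s hs x
    have heqf : (fun x' => ut x' s) = fun x' => w x' s - 3/2 * (u x' s * ux x' s) :=
      funext fun x' => by have := hw_pde s hs x'; linarith
    rw [heqf]
    have hprod : HasDerivAt (fun x' => u x' s * ux x' s)
        (ux x s * ux x s + u x s * uxx x s) x := (hux x s hs).mul (huxx x s hs)
    simpa only [hg_def] using (hwd s hs x).fun_sub (hprod.const_mul (3/2))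
  have hg_x : ∀ s ∈ Set.Ico (0:ℝ) T, ∀ x,
      HasDerivAt (fun x' => gg x' s) (hh x s) x := by
    intro s hs x
    have ha : HasDerivAt (fun x' => ux x' s * ux x' s)
        (uxx x s * ux x s + ux x s * uxx x s) x := (huxx x s hs).mul (huxx x s hs)
    have hb : HasDerivAt (fun x' => u x' s * uxx x' s)
        (ux x s * uxx x s + u x s * uxxx x s) x := (hux x s hs).mul (huxxx x s hs)
    have := (hw1d s hs x).fun_sub ((ha.fun_add hb).const_mul (3/2))
    simpa only [hg_def, hh_def] using this
  -- joint continuity of w and hh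
  have hwc : ContinuousOn (fun p : ℝ × ℝ => w p.1 p.2) (Set.univ ×ˢ Set.Ico 0 T) := by
    apply ContinuousOn.congr (f := fun p : ℝ × ℝ => ut p.1 p.2 + 3/2 * (u p.1 p.2 * ux p.1 p.2))
    · exact hutc.add (continuousOn_const.mul (huc.mul huxc))
    · intro p hp
      exact hw_pde p.2 hp.2 p.1
  have hhc : ContinuousOn (fun p : ℝ × ℝ => hh p.1 p.2) (Set.univ ×ˢ Set.Ico 0 T) := by
    simp only [hh_def]
    exact (hwc.sub huxc).sub (continuousOn_const.mul
      (((huxxc.mul huxc).add (huxc.mul huxxc)).add ((huxc.mul huxxc).add (huc.mul huxxxc))))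
  -- continuity in time of w1 and gg
  have hw1t : ∀ (x b : ℝ), b < T → ContinuousOn (fun τ => w1 x τ) (Icc 0 b) := by
    intro x b hb
    simp only [hw1_def]
    apply cont_param (F := fun y τ => FWKernel y * uxx (x - y) τ)
    apply ContinuousOn.mul
    · exact (FWKernel_cont.comp continuous_fst).continuousOn
    · have hm : Continuous fun p : ℝ × ℝ => ((x - p.1, p.2) : ℝ × ℝ) := by fun_prop
      exact huxxc.comp hm.continuousOn (fun p hp => ⟨trivial, hsub b hb p.2 hp.2⟩)
  have hggt : ∀ (x b : ℝ), b < T → ContinuousOn (fun τ => gg x τ) (Icc 0 b) := by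
    intro x b hb
    simp only [hg_def]
    exact (hw1t x b hb).sub (continuousOn_const.mul
      (((hct ux huxc x b hb).mul (hct ux huxc x b hb)).add
        ((hct u huc x b hb).mul (hct uxx huxxc x b hb))))

  -- kernel bound
  obtain ⟨CK, hCK⟩ := isCompact_Icc.exists_bound_of_continuousOn
    (FWKernel_cont.continuousOn (s := Icc (0:ℝ) 1))
  have hCK0 : 0 ≤ CK := le_trans (norm_nonneg _) (hCK 0 ⟨le_refl _, zero_le_one⟩)
  -- FTC in time for u
  have hFTCu : ∀ s ∈ Set.Ico (0:ℝ) T, ∀ x,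
      (∫ τ in (0:ℝ)..s, ut x τ) = u x s - u x 0 := by
    intro s hs x
    apply intervalIntegral.integral_eq_sub_of_hasDeriv_right_of_le hs.1
      (hct u huc x s hs.2)
    · intro τ hτ
      have hmem : τ ∈ Set.Ico (0:ℝ) T := ⟨le_of_lt hτ.1, lt_trans hτ.2 hs.2⟩
      exact ((hut x τ hmem).hasDerivAt
        (Ico_mem_nhds hτ.1 (lt_trans hτ.2 hs.2))).hasDerivWithinAt
    · have : ContinuousOn (fun τ => ut x τ) (uIcc 0 s) := by
        rw [uIcc_of_le hs.1]; exact hct ut hutc x s hs.2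
      exact this.intervalIntegrable
  -- x-derivative of the time integral of ut
  have key1 : ∀ s ∈ Set.Ico (0:ℝ) T, ∀ x,
      ux x s - ux x 0 = ∫ τ in (0:ℝ)..s, gg x τ := by
    intro s hs x₀
    obtain ⟨C0, hC0n, hC0⟩ := hbound u huc (x₀ - 2) (x₀ + 1) s hs.2
    obtain ⟨C1, hC1n, hC1⟩ := hbound ux huxc (x₀ - 2) (x₀ + 1) s hs.2
    obtain ⟨C2, hC2n, hC2⟩ := hbound uxx huxxc (x₀ - 2) (x₀ + 1) s hs.2
    have hIsub : ∀ τ ∈ Set.uIoc (0:ℝ) s, τ ∈ Set.Ico (0:ℝ) T := by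
      intro τ hτ
      rw [Set.uIoc_of_le hs.1] at hτ
      exact ⟨le_of_lt hτ.1, lt_of_le_of_lt hτ.2 hs.2⟩
    have hIsub' : ∀ τ ∈ Set.uIoc (0:ℝ) s, τ ∈ Icc (0:ℝ) s := by
      intro τ hτ
      rw [Set.uIoc_of_le hs.1] at hτ
      exact ⟨le_of_lt hτ.1, hτ.2⟩
    have hballmem : ∀ x ∈ Metric.ball x₀ 1, x ∈ Icc (x₀ - 2) (x₀ + 1) := by
      intro x hx
      rw [Metric.mem_ball, Real.dist_eq] at hx
      cases' abs_lt.mp hx with l r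
      exact ⟨by linarith, by linarith⟩
    have hw1b : ∀ x ∈ Metric.ball x₀ 1, ∀ τ ∈ Set.uIoc (0:ℝ) s, |w1 x τ| ≤ CK * C2 := by
      intro x hx τ hτ
      simp only [hw1_def]
      have hb := intervalIntegral.norm_integral_le_of_norm_le_const
        (C := CK * C2) (f := fun y => FWKernel y * uxx (x - y) τ) (a := 0) (b := 1) ?_
      · rw [Real.norm_eq_abs] at hb
        simpa using hb
      · intro y hy
        rw [Set.uIoc_of_le (zero_le_one)] at hy
        have h1 : |FWKernel y| ≤ CK := by
          simpa [Real.norm_eq_abs] using hCK y ⟨le_of_lt hy.1, hy.2⟩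
        have hx' : x₀ - 1 < x ∧ x < x₀ + 1 := by
          rw [Metric.mem_ball, Real.dist_eq] at hx
          exact ⟨by linarith [(abs_lt.mp hx).1], by linarith [(abs_lt.mp hx).2]⟩
        have h2 : |uxx (x - y) τ| ≤ C2 := by
          apply hC2 (x - y) _ τ (hIsub' τ hτ)
          exact ⟨by linarith [hy.2, hx'.1], by linarith [hy.1, hx'.2]⟩
        rw [Real.norm_eq_abs, abs_mul]
        exact mul_le_mul h1 h2 (abs_nonneg _) hCK0
    have hdom := intervalIntegral.hasDerivAt_integral_of_dominated_loc_of_deriv_le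
      (F := fun x τ => ut x τ) (F' := fun x τ => gg x τ) (x₀ := x₀)
      (a := (0:ℝ)) (b := s) (μ := volume)
      (bound := fun _ => CK * C2 + 3/2 * (C1 * C1 + C0 * C2)) (Metric.ball_mem_nhds x₀ one_pos) ?_ ?_ ?_ ?_ ?_ ?_
    · have hd2 : HasDerivAt (fun x => u x s - u x 0) (ux x₀ s - ux x₀ 0) x₀ :=
        (hux x₀ s hs).sub (hux x₀ 0 ⟨le_refl 0, hT⟩)
      have heqf : (fun x => ∫ τ in (0:ℝ)..s, ut x τ) = fun x => u x s - u x 0 :=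
        funext fun x => hFTCu s hs x
      have hd1 := hdom.2
      rw [heqf] at hd1
      exact hd2.unique hd1
    · filter_upwards with x
      exact (((hct ut hutc x s hs.2).mono hIsub').aestronglyMeasurable measurableSet_uIoc)
    · have : ContinuousOn (fun τ => ut x₀ τ) (uIcc 0 s) := by
        rw [uIcc_of_le hs.1]; exact hct ut hutc x₀ s hs.2
      exact this.intervalIntegrable
    · exact ((hggt x₀ s hs.2).mono hIsub').aestronglyMeasurable measurableSet_uIoc
    · filter_upwards with τ hτ x hx
      have hτ' := hIsub' τ hτ
      have hxmem := hballmem x hx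
      have e1 : |w1 x τ| ≤ CK * C2 := hw1b x hx τ hτ
      have e2 : |ux x τ| ≤ C1 := hC1 x hxmem τ hτ'
      have e3 : |u x τ| ≤ C0 := hC0 x hxmem τ hτ'
      have e4 : |uxx x τ| ≤ C2 := hC2 x hxmem τ hτ'
      simp only [hg_def, Real.norm_eq_abs]
      have : |w1 x τ - 3/2 * (ux x τ * ux x τ + u x τ * uxx x τ)|
          ≤ |w1 x τ| + 3/2 * (|ux x τ| * |ux x τ| + |u x τ| * |uxx x τ|) := by
        calc |w1 x τ - 3/2 * (ux x τ * ux x τ + u x τ * uxx x τ)|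
            ≤ |w1 x τ| + |3/2 * (ux x τ * ux x τ + u x τ * uxx x τ)| := abs_sub _ _
          _ ≤ _ := by
              rw [abs_mul, abs_of_pos (by norm_num : (0:ℝ) < 3/2)]
              have := abs_add_le (ux x τ * ux x τ) (u x τ * uxx x τ)
              rw [abs_mul, abs_mul] at this
              nlinarith [abs_nonneg (w1 x τ)]
      apply le_trans this
      have m1 : |ux x τ| * |ux x τ| ≤ C1 * C1 :=
        mul_le_mul e2 e2 (abs_nonneg _) hC1n
      have m2 : |u x τ| * |uxx x τ| ≤ C0 * C2 :=
        mul_le_mul e3 e4 (abs_nonneg _) hC0n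
      nlinarith
    · exact intervalIntegrable_const
    · filter_upwards with τ hτ x hx
      exact hut_x τ (hIsub τ hτ) x

  -- second x-derivative: representation of uxx in time
  have rep : ∀ s ∈ Set.Ico (0:ℝ) T, ∀ x,
      uxx x s = uxx x 0 + ∫ τ in (0:ℝ)..s, hh x τ := by
    intro s hs x₀
    obtain ⟨Ch, hChn, hCh⟩ := hbound hh hhc (x₀ - 2) (x₀ + 1) s hs.2
    have hIsub : ∀ τ ∈ Set.uIoc (0:ℝ) s, τ ∈ Set.Ico (0:ℝ) T := by
      intro τ hτ
      rw [Set.uIoc_of_le hs.1] at hτ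
      exact ⟨le_of_lt hτ.1, lt_of_le_of_lt hτ.2 hs.2⟩
    have hIsub' : ∀ τ ∈ Set.uIoc (0:ℝ) s, τ ∈ Icc (0:ℝ) s := by
      intro τ hτ
      rw [Set.uIoc_of_le hs.1] at hτ
      exact ⟨le_of_lt hτ.1, hτ.2⟩
    have hballmem : ∀ x ∈ Metric.ball x₀ 1, x ∈ Icc (x₀ - 2) (x₀ + 1) := by
      intro x hx
      rw [Metric.mem_ball, Real.dist_eq] at hx
      cases' abs_lt.mp hx with l r
      exact ⟨by linarith, by linarith⟩
    have hdom := intervalIntegral.hasDerivAt_integral_of_dominated_loc_of_deriv_le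
      (F := fun x τ => gg x τ) (F' := fun x τ => hh x τ) (x₀ := x₀)
      (a := (0:ℝ)) (b := s) (μ := volume)
      (bound := fun _ => Ch) (Metric.ball_mem_nhds x₀ one_pos) ?_ ?_ ?_ ?_ ?_ ?_
    · have hd2 : HasDerivAt (fun x => ux x s - ux x 0) (uxx x₀ s - uxx x₀ 0) x₀ :=
        (huxx x₀ s hs).sub (huxx x₀ 0 ⟨le_refl 0, hT⟩)
      have heqf : (fun x => ∫ τ in (0:ℝ)..s, gg x τ) = fun x => ux x s - ux x 0 :=
        funext fun x => (key1 s hs x).symm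
      have hd1 := hdom.2
      rw [heqf] at hd1
      have := hd2.unique hd1
      linarith [this]
    · filter_upwards with x
      exact ((hggt x s hs.2).mono hIsub').aestronglyMeasurable measurableSet_uIoc
    · have : ContinuousOn (fun τ => gg x₀ τ) (uIcc 0 s) := by
        rw [uIcc_of_le hs.1]; exact hggt x₀ s hs.2
      exact this.intervalIntegrable
    · exact ((hct hh hhc x₀ s hs.2).mono hIsub').aestronglyMeasurable measurableSet_uIoc
    · filter_upwards with τ hτ x hx
      rw [Real.norm_eq_abs]
      exact hCh x (hballmem x hx) τ (hIsub' τ hτ)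
    · exact intervalIntegrable_const
    · filter_upwards with τ hτ x hx
      exact hg_x τ (hIsub τ hτ) x
  -- time derivative of uxx at interior times
  have hder : ∀ (x : ℝ), ∀ s ∈ Set.Ioo (0:ℝ) T,
      HasDerivAt (fun τ => uxx x τ) (hh x s) s := by
    intro x s hs
    have hsIco : s ∈ Set.Ico (0:ℝ) T := ⟨le_of_lt hs.1, hs.2⟩
    have hmem : Set.Ioo (0:ℝ) T ∈ nhds s := Ioo_mem_nhds hs.1 hs.2
    have hhtIco : ContinuousOn (fun τ => hh x τ) (Set.Ico 0 T) := hcIco hh hhc x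
    have hint : IntervalIntegrable (fun τ => hh x τ) volume 0 s := by
      have : ContinuousOn (fun τ => hh x τ) (uIcc 0 s) := by
        rw [uIcc_of_le hsIco.1]; exact hct hh hhc x s hs.2
      exact this.intervalIntegrable
    have hsmf : StronglyMeasurableAtFilter (fun τ => hh x τ) (nhds s) volume :=
      ⟨Set.Ioo 0 T, hmem,
        ((hhtIco.mono Set.Ioo_subset_Ico_self).aestronglyMeasurable measurableSet_Ioo)⟩
    have hcont : ContinuousAt (fun τ => hh x τ) s :=
      (hhtIco s hsIco).continuousAt (Ico_mem_nhds hs.1 hs.2)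
    have h1 := intervalIntegral.integral_hasDerivAt_right hint hsmf hcont
    have h2 := h1.const_add (uxx x 0)
    have heq : (fun τ => uxx x τ)
        =ᶠ[nhds s] (fun b => uxx x 0 + ∫ τ in (0:ℝ)..b, hh x τ) := by
      filter_upwards [hmem] with b hb
      exact rep b ⟨le_of_lt hb.1, hb.2⟩ x
    exact h2.congr_of_eventuallyEq heq

  -- the key integral identity and bound
  have hDbound : ∀ s ∈ Set.Ico (0:ℝ) T,
      (∫ x in (0:ℝ)..1, 2 * uxx x s * hh x s)
        ≤ 15 * M / 2 * ∫ x in (0:ℝ)..1, (uxx x s)^2 := by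
    intro s hs
    have cu : Continuous (fun x => u x s) := hcx u huc s hs
    have cux : Continuous (fun x => ux x s) := hcx ux huxc s hs
    have cuxx : Continuous (fun x => uxx x s) := hcx uxx huxxc s hs
    have cuxxx : Continuous (fun x => uxxx x s) := hcx uxxx huxxxc s hs
    have cw : Continuous (fun x => w x s) := by
      have hd : Differentiable ℝ (fun x => w x s) := fun x => (hwd s hs x).differentiableAt
      exact hd.continuous
    have cw1 : Continuous (fun x => w1 x s) := by
      have hd : Differentiable ℝ (fun x => w1 x s) := fun x => (hw1d s hs x).differentiableAt
      exact hd.continuous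
    have pu : u 1 s = u 0 s := by have := huper 0 s hs; simpa using this
    have pux : ux 1 s = ux 0 s := by have := per_ux s hs 0; simpa using this
    have puxx : uxx 1 s = uxx 0 s := by have := per_uxx s hs 0; simpa using this
    have pw : w 1 s = w 0 s := by
      simp only [hw_def]
      apply intervalIntegral.integral_congr
      intro y _
      show FWKernel y * ux (1 - y) s = FWKernel y * ux (0 - y) s
      rw [show (1:ℝ) - y = (0 - y) + 1 by ring, per_ux s hs (0 - y)]
    have pw1 : w1 1 s = w1 0 s := by
      simp only [hw1_def]
      apply intervalIntegral.integral_congr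
      intro y _
      show FWKernel y * uxx (1 - y) s = FWKernel y * uxx (0 - y) s
      rw [show (1:ℝ) - y = (0 - y) + 1 by ring, per_uxx s hs (0 - y)]
    set A := ∫ x in (0:ℝ)..1, ux x s * (uxx x s * uxx x s) with hA_def
    set B := ∫ x in (0:ℝ)..1, u x s * (uxx x s * uxxx x s) with hB_def
    set P := ∫ x in (0:ℝ)..1, uxx x s * w x s with hP_def
    set Q := ∫ x in (0:ℝ)..1, ux x s * w1 x s with hQ_def
    set R := ∫ x in (0:ℝ)..1, w x s * w1 x s with hR_def
    set I2 := ∫ x in (0:ℝ)..1, ux x s * uxx x s with hI2_def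
    have FTC : ∀ (f f' : ℝ → ℝ), (∀ x, HasDerivAt f (f' x) x) → Continuous f' →
        f 1 = f 0 → (∫ x in (0:ℝ)..1, f' x) = 0 := by
      intro f f' hd hc hper
      rw [intervalIntegral.integral_eq_sub_of_hasDerivAt (fun x _ => hd x)
        (hc.intervalIntegrable 0 1), hper, sub_self]
    -- e1 : I2 = 0
    have e1 : (∫ x in (0:ℝ)..1, (uxx x s * ux x s + ux x s * uxx x s)) = 0 :=
      FTC _ _ (fun x => (huxx x s hs).fun_mul (huxx x s hs))
        ((cuxx.fun_mul cux).fun_add (cux.fun_mul cuxx)) (by rw [pux])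
    rw [intervalIntegral.integral_add ((cuxx.fun_mul cux).intervalIntegrable 0 1)
      ((cux.fun_mul cuxx).intervalIntegrable 0 1)] at e1
    have c1 : (∫ x in (0:ℝ)..1, uxx x s * ux x s) = I2 := by
      rw [hI2_def]
      exact intervalIntegral.integral_congr (fun x _ => by ring)
    rw [c1, ← hI2_def] at e1
    have hI2z : I2 = 0 := by linarith
    -- e2 : A + 2B = 0
    have e2 : (∫ x in (0:ℝ)..1,
        (ux x s * (uxx x s * uxx x s)
          + u x s * (uxxx x s * uxx x s + uxx x s * uxxx x s))) = 0 :=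
      FTC _ _ (fun x => (hux x s hs).fun_mul ((huxxx x s hs).fun_mul (huxxx x s hs)))
        ((cux.fun_mul (cuxx.fun_mul cuxx)).fun_add (cu.fun_mul ((cuxxx.fun_mul cuxx).fun_add (cuxx.fun_mul cuxxx))))
        (by rw [pu, puxx])
    rw [intervalIntegral.integral_add ((cux.fun_mul (cuxx.fun_mul cuxx)).intervalIntegrable 0 1)
      ((cu.fun_mul ((cuxxx.fun_mul cuxx).fun_add (cuxx.fun_mul cuxxx))).intervalIntegrable 0 1),
      ← hA_def] at e2
    have c2 : (∫ x in (0:ℝ)..1, u x s * (uxxx x s * uxx x s + uxx x s * uxxx x s))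
        = 2 * B := by
      rw [hB_def, ← intervalIntegral.integral_const_mul]
      exact intervalIntegral.integral_congr (fun x _ => by ring)
    rw [c2] at e2
    -- e3 : P + Q = 0
    have e3 : (∫ x in (0:ℝ)..1, (uxx x s * w x s + ux x s * w1 x s)) = 0 :=
      FTC _ _ (fun x => (huxx x s hs).fun_mul (hwd s hs x))
        ((cuxx.fun_mul cw).fun_add (cux.fun_mul cw1)) (by rw [pux, pw])
    rw [intervalIntegral.integral_add ((cuxx.fun_mul cw).intervalIntegrable 0 1)
      ((cux.fun_mul cw1).intervalIntegrable 0 1), ← hP_def, ← hQ_def] at e3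
    -- e4 : R = 0
    have e4 : (∫ x in (0:ℝ)..1, (w1 x s * w x s + w x s * w1 x s)) = 0 :=
      FTC _ _ (fun x => (hwd s hs x).fun_mul (hwd s hs x))
        ((cw1.fun_mul cw).fun_add (cw.fun_mul cw1)) (by rw [pw])
    rw [intervalIntegral.integral_add ((cw1.fun_mul cw).intervalIntegrable 0 1)
      ((cw.fun_mul cw1).intervalIntegrable 0 1)] at e4
    have c4 : (∫ x in (0:ℝ)..1, w1 x s * w x s) = R := by
      rw [hR_def]
      exact intervalIntegral.integral_congr (fun x _ => by ring)
    rw [c4, ← hR_def] at e4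
    have hRz : R = 0 := by linarith
    -- e5 : R - Q = 0
    have e5 : (∫ x in (0:ℝ)..1,
        ((w x s - ux x s) * w1 x s + w1 x s * (w x s - ux x s))) = 0 :=
      FTC _ _ (fun x => (hw1d s hs x).fun_mul (hw1d s hs x))
        (((cw.fun_sub cux).fun_mul cw1).fun_add (cw1.fun_mul (cw.fun_sub cux))) (by rw [pw1])
    have c5 : (∫ x in (0:ℝ)..1,
        ((w x s - ux x s) * w1 x s + w1 x s * (w x s - ux x s)))
        = ∫ x in (0:ℝ)..1, (2 * (w x s * w1 x s) - 2 * (ux x s * w1 x s)) :=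
      intervalIntegral.integral_congr (fun x _ => by ring)
    rw [c5, intervalIntegral.integral_sub
      ((continuous_const.fun_mul (cw.fun_mul cw1)).intervalIntegrable 0 1)
      ((continuous_const.fun_mul (cux.fun_mul cw1)).intervalIntegrable 0 1),
      intervalIntegral.integral_const_mul, intervalIntegral.integral_const_mul,
      ← hR_def, ← hQ_def] at e5
    have hQz : Q = 0 := by linarith
    have hPz : P = 0 := by linarith
    -- expansion of the main integral
    have c6 : (fun x => 2 * uxx x s * hh x s)
        = fun x => 2 * (uxx x s * w x s)
            - (2 * (ux x s * uxx x s)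
              + (9 * (ux x s * (uxx x s * uxx x s))
                + 3 * (u x s * (uxx x s * uxxx x s)))) := by
      funext x
      simp only [hh_def]
      ring
    have hmain : (∫ x in (0:ℝ)..1, 2 * uxx x s * hh x s)
        = 2 * P - (2 * I2 + (9 * A + 3 * B)) := by
      rw [c6, intervalIntegral.integral_sub
        ((continuous_const.fun_mul (cuxx.fun_mul cw)).intervalIntegrable 0 1)
        (((continuous_const.fun_mul (cux.fun_mul cuxx)).fun_add
          ((continuous_const.fun_mul (cux.fun_mul (cuxx.fun_mul cuxx))).fun_add
            (continuous_const.fun_mul (cu.fun_mul (cuxx.fun_mul cuxxx))))).intervalIntegrable 0 1),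
        intervalIntegral.integral_add
          ((continuous_const.fun_mul (cux.fun_mul cuxx)).intervalIntegrable 0 1)
          (((continuous_const.fun_mul (cux.fun_mul (cuxx.fun_mul cuxx))).fun_add
            (continuous_const.fun_mul (cu.fun_mul (cuxx.fun_mul cuxxx)))).intervalIntegrable 0 1),
        intervalIntegral.integral_add
          ((continuous_const.fun_mul (cux.fun_mul (cuxx.fun_mul cuxx))).intervalIntegrable 0 1)
          ((continuous_const.fun_mul (cu.fun_mul (cuxx.fun_mul cuxxx))).intervalIntegrable 0 1),
        intervalIntegral.integral_const_mul, intervalIntegral.integral_const_mul,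
        intervalIntegral.integral_const_mul, intervalIntegral.integral_const_mul,
        ← hP_def, ← hI2_def, ← hA_def, ← hB_def]
    -- the sign bound
    have hAle : -A ≤ M * ∫ x in (0:ℝ)..1, (uxx x s)^2 := by
      have hm := intervalIntegral.integral_mono_on (a := (0:ℝ)) (b := 1) (μ := volume)
        (f := fun x => -(ux x s * (uxx x s * uxx x s)))
        (g := fun x => M * (uxx x s)^2) zero_le_one
        ((cux.fun_mul (cuxx.fun_mul cuxx)).fun_neg.intervalIntegrable 0 1)
        ((continuous_const.fun_mul (cuxx.fun_pow 2)).intervalIntegrable 0 1)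
        (fun x _ => by
          have h1 : -M ≤ ux x s := hlower x s hs
          have h2 := mul_nonneg (by linarith : (0:ℝ) ≤ ux x s + M) (mul_self_nonneg (uxx x s))
          have h3 : (uxx x s)^2 = uxx x s * uxx x s := pow_two (uxx x s)
          show -(ux x s * (uxx x s * uxx x s)) ≤ M * (uxx x s)^2
          nlinarith [h2, h3])
      rw [intervalIntegral.integral_neg, intervalIntegral.integral_const_mul, ← hA_def] at hm
      exact hm
    linarith [hmain, hPz, hI2z, e2, hAle]
  -- continuity of the energy
  have hEcont : ∀ b : ℝ, b < T →
      ContinuousOn (fun τ => ∫ x in (0:ℝ)..1, (uxx x τ)^2) (Icc 0 b) := by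
    intro b hb
    apply cont_param (F := fun x τ => (uxx x τ)^2)
    exact (huxxc.mono (fun p hp => ⟨trivial, hsub b hb p.2 hp.2⟩)).pow 2
  -- derivative of the energy at interior times
  intro t ht
  rcases eq_or_lt_of_le ht.1 with h0 | h0
  · rw [← h0]
    simp
  have hEd : ∀ s ∈ Set.Ioo (0:ℝ) t,
      HasDerivAt (fun τ => ∫ x in (0:ℝ)..1, (uxx x τ)^2)
        (∫ x in (0:ℝ)..1, 2 * uxx x s * hh x s) s := by
    intro s hs
    have hsT : s < T := lt_trans hs.2 ht.2
    have hsIco : s ∈ Set.Ico (0:ℝ) T := ⟨le_of_lt hs.1, hsT⟩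
    set ε := min s (T - s) / 2 with hε_def
    have hε0 : 0 < ε := by
      rw [hε_def]
      have := lt_min hs.1 (by linarith : (0:ℝ) < T - s)
      linarith
    have hεs : ε ≤ s / 2 := by
      rw [hε_def]
      have := min_le_left s (T - s)
      linarith
    have hεT : s + ε < T := by
      rw [hε_def]
      have := min_le_right s (T - s)
      have hTs : 0 < T - s := by linarith
      have : min s (T - s) / 2 < T - s := by
        have h1 : min s (T - s) ≤ T - s := min_le_right _ _
        linarith
      linarith
    have hball : ∀ s' ∈ Metric.ball s ε, s' ∈ Set.Ioo (0:ℝ) T ∧ s' ∈ Icc (0:ℝ) (s + ε) := by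
      intro s' h
      rw [Metric.mem_ball, Real.dist_eq] at h
      have h1 := (abs_lt.mp h).1
      have h2 := (abs_lt.mp h).2
      have hpos : 0 < s' := by linarith
      exact ⟨⟨hpos, by linarith⟩, ⟨le_of_lt hpos, by linarith⟩⟩
    obtain ⟨C, hCn, hC⟩ := hbound (fun x τ => 2 * uxx x τ * hh x τ)
      ((continuousOn_const.mul huxxc).mul hhc) 0 1 (s + ε) hεT
    refine (intervalIntegral.hasDerivAt_integral_of_dominated_loc_of_deriv_le
      (F := fun τ x => (uxx x τ)^2) (F' := fun τ x => 2 * uxx x τ * hh x τ)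
      (x₀ := s) (a := (0:ℝ)) (b := 1) (μ := volume)
      (bound := fun _ => C) (Metric.ball_mem_nhds s hε0) ?_ ?_ ?_ ?_ ?_ ?_).2
    · filter_upwards [Metric.ball_mem_nhds s hε0] with s' hs'
      have hm := (hball s' hs').1
      exact (((hcx uxx huxxc s' ⟨le_of_lt hm.1, hm.2⟩).pow 2).aestronglyMeasurable).restrict
    · exact ((hcx uxx huxxc s hsIco).pow 2).intervalIntegrable 0 1
    · exact (((continuous_const.mul (hcx uxx huxxc s hsIco)).mul
        (hcx hh hhc s hsIco)).aestronglyMeasurable).restrict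
    · filter_upwards with x hx s' hs'
      rw [Set.uIoc_of_le zero_le_one] at hx
      rw [Real.norm_eq_abs]
      exact hC x (Ioc_subset_Icc_self hx) s' (hball s' hs').2
    · exact intervalIntegrable_const
    · filter_upwards with x hx s' hs'
      have hm := (hball s' hs').1
      have h := (hder x s' hm).fun_pow 2
      exact h.congr_deriv (by push_cast; ring)
  -- Gronwall on [a, t], then let a → 0⁺
  have hgron : ∀ a ∈ Set.Ioo (0:ℝ) t,
      (∫ x in (0:ℝ)..1, (uxx x t)^2)
        ≤ (∫ x in (0:ℝ)..1, (uxx x a)^2) * Real.exp (15 * M / 2 * (t - a)) := by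
    intro a ha
    have h := le_gronwallBound_of_liminf_deriv_right_le
      (f := fun τ => ∫ x in (0:ℝ)..1, (uxx x τ)^2)
      (f' := fun τ => ∫ x in (0:ℝ)..1, 2 * uxx x τ * hh x τ)
      (δ := ∫ x in (0:ℝ)..1, (uxx x a)^2) (K := 15 * M / 2) (ε := 0) (a := a) (b := t)
      ((hEcont t ht.2).mono (Icc_subset_Icc (le_of_lt ha.1) (le_refl t)))
      (fun τ hτ r hr =>
        ((hEd τ ⟨lt_of_lt_of_le ha.1 hτ.1, hτ.2⟩).hasDerivWithinAt).liminf_right_slope_le hr)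
      (le_refl _)
      (fun τ hτ => by
        have h1 := hDbound τ ⟨le_of_lt (lt_of_lt_of_le ha.1 hτ.1), lt_trans hτ.2 ht.2⟩
        rw [add_zero]
        exact h1)
      t ⟨le_of_lt ha.2, le_refl t⟩
    rwa [gronwallBound_ε0] at h
  have hne : (nhdsWithin (0:ℝ) (Set.Ioo 0 t)).NeBot := by
    apply mem_closure_iff_nhdsWithin_neBot.mp
    rw [closure_Ioo (ne_of_lt h0)]
    exact ⟨le_refl 0, le_of_lt h0⟩
  have hlim : Filter.Tendsto
      (fun a => (∫ x in (0:ℝ)..1, (uxx x a)^2) * Real.exp (15 * M / 2 * (t - a)))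
      (nhdsWithin 0 (Set.Ioo 0 t))
      (nhds ((∫ x in (0:ℝ)..1, (uxx x 0)^2) * Real.exp (15 * M / 2 * (t - 0)))) := by
    apply Filter.Tendsto.mul
    · exact ((hEcont t ht.2) 0 ⟨le_refl 0, le_of_lt h0⟩).mono_left
        (nhdsWithin_mono 0 Set.Ioo_subset_Icc_self)
    · have hc : Continuous (fun a : ℝ => Real.exp (15 * M / 2 * (t - a))) := by fun_prop
      exact (hc.tendsto 0).mono_left nhdsWithin_le_nhds
  have hfin := ge_of_tendsto hlim (by
    filter_upwards [self_mem_nhdsWithin] with a ha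
    exact hgron a ha)
  have hE0 : 0 ≤ ∫ x in (0:ℝ)..1, (uxx x 0)^2 :=
    intervalIntegral.integral_nonneg zero_le_one (fun x _ => sq_nonneg _)
  have hexp : Real.exp (15 * M / 2 * (t - 0)) ≤ Real.exp ((2 + 15 * M / 2) * t) :=
    Real.exp_le_exp.mpr (by nlinarith)
  calc (∫ x in (0:ℝ)..1, (uxx x t)^2)
      ≤ (∫ x in (0:ℝ)..1, (uxx x 0)^2) * Real.exp (15 * M / 2 * (t - 0)) := hfin
    _ ≤ (∫ x in (0:ℝ)..1, (uxx x 0)^2) * Real.exp ((2 + 15 * M / 2) * t) :=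
        mul_le_mul_of_nonneg_left hexp hE0
    _ = Real.exp ((2 + 15 * M / 2) * t) * ∫ x in (0:ℝ)..1, (uxx x 0)^2 := mul_comm _ _
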